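/- Nonnegativity and boundedness of stabilizer Rényi entropies: for any n-qubit pure state ψ and any α ≥ 0, 0 ≤ M_α(ψ) ≤ n, with M_α(ψ) = 0 whenever ψ is a pure stabilizer state. -/

import Mathlib

open scoped BigOperators
open ComplexConjugate
open scoped ComplexOrder

noncomputable def traceNorm {ι : Type*} [Fintype ι] [DecidableEq ι] (A : Matrix ι ι ℂ) : ℝ :=
  (((Matrix.posSemidef_conjTranspose_mul_self A).1.eigenvectorUnitary.1 *
      Matrix.diagonal (fun i =>
        ((Real.sqrt ((Matrix.posSemidef_conjTranspose_mul_self A).1.eigenvalues i) : ℝ) : ℂ)) *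
      (star (Matrix.posSemidef_conjTranspose_mul_self A).1.eigenvectorUnitary :
        Matrix ι ι ℂ)).trace).re

noncomputable def proj {ι : Type*} (v : ι → ℂ) : Matrix ι ι ℂ :=
  Matrix.of fun i j => v i * conj (v j)

noncomputable def tensorPow {ι : Type*} (A : Matrix ι ι ℂ) (t : ℕ) :
    Matrix (Fin t → ι) (Fin t → ι) ℂ :=
  Matrix.of fun x y => ∏ i, A (x i) (y i)

noncomputable def pauli {n : ℕ} (a b : Fin n → ZMod 2) :
    Matrix (Fin n → ZMod 2) (Fin n → ZMod 2) ℂ :=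
  Matrix.of fun x y =>
    if x = y + a then
      Complex.I ^ (∑ i, (a i * b i).val) * (-1 : ℂ) ^ (∑ i, (b i * y i).val)
    else 0

noncomputable def xi {n : ℕ} (ρ : Matrix (Fin n → ZMod 2) (Fin n → ZMod 2) ℂ)
    (p : (Fin n → ZMod 2) × (Fin n → ZMod 2)) : ℝ :=
  Complex.normSq ((pauli p.1 p.2 * ρ).trace) / 2 ^ n

/-- α-stabilizer Rényi entropy M_α(ψ) = S_α(Ξ_ψ) − log d, covering α = 0, α = 1 and
generic α via the classical Rényi entropy (base-2 logs). -/
noncomputable def MStab (α : ℝ) {n : ℕ}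
    (ρ : Matrix (Fin n → ZMod 2) (Fin n → ZMod 2) ℂ) : ℝ :=
  (if α = 1 then
      - ∑ p : (Fin n → ZMod 2) × (Fin n → ZMod 2), xi ρ p * Real.logb 2 (xi ρ p)
    else if α = 0 then
      Real.logb 2 (({p : (Fin n → ZMod 2) × (Fin n → ZMod 2) | xi ρ p ≠ 0}.ncard : ℝ))
    else
      (1 / (1 - α)) * Real.logb 2
        (∑ p : (Fin n → ZMod 2) × (Fin n → ZMod 2), xi ρ p ^ α)) - n

/-- A unit vector represents a pure stabilizer state iff its stabilizer group
G_ψ = {P : tr(Pψ) = ±1} has the maximal size 2^n. -/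
def IsStabVec {n : ℕ} (u : (Fin n → ZMod 2) → ℂ) : Prop :=
  {p : (Fin n → ZMod 2) × (Fin n → ZMod 2) |
      Complex.normSq ((pauli p.1 p.2 * proj u).trace) = 1}.ncard = 2 ^ n

lemma negOne_congr (k m : ℕ) (h : (k : ZMod 2) = (m : ZMod 2)) : (-1 : ℂ) ^ k = (-1 : ℂ) ^ m := by
  have h2 : k % 2 = m % 2 := (ZMod.natCast_eq_natCast_iff' k m 2).mp h
  rw [neg_one_pow_eq_pow_mod_two, h2, ← neg_one_pow_eq_pow_mod_two]

lemma negOne_pow_sum {ι : Type*} (s : Finset ι) (f : ι → ZMod 2) :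
    (-1 : ℂ) ^ (∑ j ∈ s, (f j).val) = (-1 : ℂ) ^ ((∑ j ∈ s, f j).val) := by
  apply negOne_congr
  push_cast
  rw [Finset.sum_congr rfl (fun j _ => ZMod.natCast_rightInverse (f j)),
    ZMod.natCast_rightInverse]

lemma chi_add_one (x : ZMod 2) : (-1 : ℂ) ^ (x + 1).val = -((-1 : ℂ) ^ x.val) := by
  have h2 : ZMod.val (2 : ZMod 2) = 0 := rfl
  have h0 : ZMod.val (0 : ZMod 2) = 0 := rfl
  have h1 : ZMod.val (1 : ZMod 2) = 1 := rfl
  have h11 : (1 + 1 : ZMod 2) = 0 := rfl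
  fin_cases x
  · show (-1 : ℂ) ^ ((0 : ZMod 2) + 1).val = -((-1 : ℂ) ^ (0 : ZMod 2).val)
    rw [zero_add, h1, h0]; norm_num
  · show (-1 : ℂ) ^ ((1 : ZMod 2) + 1).val = -((-1 : ℂ) ^ (1 : ZMod 2).val)
    rw [h11, h0, h1]; norm_num

lemma char_sum {n : ℕ} (w : Fin n → ZMod 2) :
    ∑ b : Fin n → ZMod 2, (-1 : ℂ) ^ (∑ i, (b i * w i).val)
      = if w = 0 then ((2 : ℂ) ^ n) else 0 := by
  split_ifs with hw
  · subst hw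
    simp only [Pi.zero_apply, mul_zero, ZMod.val_zero, Finset.sum_const_zero, pow_zero]
    rw [Finset.sum_const]
    simp [Finset.card_univ]
  · obtain ⟨i, hi⟩ : ∃ i, w i ≠ 0 := by
      by_contra h
      push_neg at h
      exact hw (funext h)
    have hwi : w i = 1 := by
      have : ∀ x : ZMod 2, x ≠ 0 → x = 1 := by decide
      exact this _ hi
    apply Finset.sum_ninvolution (g := fun b => b + (Pi.single i 1 : Fin n → ZMod 2))
    · intro b
      rw [negOne_pow_sum, negOne_pow_sum]
      have key : ∑ j, (b + (Pi.single i 1 : Fin n → ZMod 2)) j * w j = (∑ j, b j * w j) + 1 := by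
        simp only [Pi.add_apply, add_mul, Finset.sum_add_distrib]
        congr 1
        rw [Finset.sum_eq_single i]
        · simp [hwi]
        · intro j _ hj; simp [Pi.single_eq_of_ne hj]
        · simp
      rw [key, chi_add_one]
      ring
    · intro b _
      intro h
      have : (b + (Pi.single i 1 : Fin n → ZMod 2)) i = b i := by rw [h]
      simp at this
    · intro b; exact Finset.mem_univ _
    · intro b
      funext j
      by_cases hj : j = i
      · subst hj
        have h11 : (1 + 1 : ZMod 2) = 0 := rfl
        simp [add_assoc, h11]
      · simp [Pi.single_eq_of_ne hj]

lemma trace_pauli_proj {n : ℕ} (a b : Fin n → ZMod 2) (u : (Fin n → ZMod 2) → ℂ) :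
    (pauli a b * proj u).trace
      = Complex.I ^ (∑ i, (a i * b i).val) *
        ∑ y, (-1 : ℂ) ^ (∑ i, (b i * y i).val) * (u y * conj (u (y + a))) := by
  rw [Matrix.trace]
  simp only [Matrix.diag, Matrix.mul_apply, pauli, proj, Matrix.of_apply]
  rw [Finset.sum_comm]
  rw [Finset.mul_sum]
  apply Finset.sum_congr rfl
  intro y _
  rw [Finset.sum_eq_single (y + a)]
  · simp [mul_assoc]
  · intro x _ hx
    rw [if_neg hx, zero_mul]
  · simp

lemma char_sum_two {n : ℕ} (y z : Fin n → ZMod 2) :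
    ∑ b : Fin n → ZMod 2,
        (-1 : ℂ) ^ (∑ i, (b i * y i).val) * (-1 : ℂ) ^ (∑ i, (b i * z i).val)
      = if y = z then ((2 : ℂ) ^ n) else 0 := by
  have key : ∀ b : Fin n → ZMod 2,
      (-1 : ℂ) ^ (∑ i, (b i * y i).val) * (-1 : ℂ) ^ (∑ i, (b i * z i).val)
        = (-1 : ℂ) ^ (∑ i, (b i * (y + z) i).val) := by
    intro b
    rw [← pow_add]
    apply negOne_congr
    push_cast
    rw [Finset.sum_congr rfl (fun j _ => ZMod.natCast_rightInverse (b j * y j)),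
      Finset.sum_congr rfl (fun j _ => ZMod.natCast_rightInverse (b j * z j)),
      Finset.sum_congr rfl (fun j _ => ZMod.natCast_rightInverse (b j * (y + z) j))]
    rw [← Finset.sum_add_distrib]
    apply Finset.sum_congr rfl
    intro j _
    simp [Pi.add_apply, mul_add]
  rw [Finset.sum_congr rfl (fun b _ => key b), char_sum]
  have : y + z = 0 ↔ y = z := by
    constructor
    · intro h; funext j
      have := congrFun h j
      simp only [Pi.add_apply, Pi.zero_apply] at this
      have h2 : ∀ s t : ZMod 2, s + t = 0 → s = t := by decide
      exact h2 _ _ this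
    · intro h; subst h; funext j
      have h2 : ∀ s : ZMod 2, s + s = 0 := by decide
      simp [h2]
  simp only [this]

lemma sum_b_normSq {n : ℕ} (v : (Fin n → ZMod 2) → ℂ) :
    ∑ b : Fin n → ZMod 2,
        Complex.normSq (∑ y, (-1 : ℂ) ^ (∑ i, (b i * y i).val) * v y)
      = 2 ^ n * ∑ y, Complex.normSq (v y) := by
  apply Complex.ofReal_injective
  push_cast
  have step1 : ∀ b : Fin n → ZMod 2,
      ((Complex.normSq (∑ y, (-1 : ℂ) ^ (∑ i, (b i * y i).val) * v y) : ℝ) : ℂ)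
        = ∑ y, ∑ z, ((-1 : ℂ) ^ (∑ i, (b i * y i).val) * (-1 : ℂ) ^ (∑ i, (b i * z i).val))
            * (v y * conj (v z)) := by
    intro b
    rw [← Complex.mul_conj, map_sum, Finset.sum_mul_sum]
    apply Finset.sum_congr rfl; intro y _
    apply Finset.sum_congr rfl; intro z _
    rw [map_mul]
    have : conj ((-1 : ℂ) ^ (∑ i, (b i * z i).val)) = (-1 : ℂ) ^ (∑ i, (b i * z i).val) := by
      rw [map_pow, map_neg, map_one]
    rw [this]; ring
  rw [Finset.sum_congr rfl (fun b _ => step1 b)]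
  rw [Finset.sum_comm]
  rw [Finset.sum_congr rfl (fun y _ => Finset.sum_comm)]
  have step2 : ∀ y, ∑ z, ∑ b : Fin n → ZMod 2,
      ((-1 : ℂ) ^ (∑ i, (b i * y i).val) * (-1 : ℂ) ^ (∑ i, (b i * z i).val))
        * (v y * conj (v z)) = (2 : ℂ) ^ n * (v y * conj (v y)) := by
    intro y
    have : ∀ z, ∑ b : Fin n → ZMod 2,
        ((-1 : ℂ) ^ (∑ i, (b i * y i).val) * (-1 : ℂ) ^ (∑ i, (b i * z i).val))
          * (v y * conj (v z))
        = (if y = z then ((2 : ℂ) ^ n) else 0) * (v y * conj (v z)) := by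
      intro z
      rw [← Finset.sum_mul, char_sum_two]
    rw [Finset.sum_congr rfl (fun z _ => this z)]
    simp [ite_mul]
  have step2' : ∀ y, ∑ z, ∑ b : Fin n → ZMod 2,
      ((-1 : ℂ) ^ (∑ i, (b i * y i).val) * (-1 : ℂ) ^ (∑ i, (b i * z i).val))
        * (v y * conj (v z)) = (2 : ℂ) ^ n * ((Complex.normSq (v y) : ℝ) : ℂ) := by
    intro y; rw [step2 y, Complex.mul_conj]
  rw [Finset.sum_congr rfl (fun y _ => step2' y), ← Finset.mul_sum]

lemma normSq_I_pow (k : ℕ) : Complex.normSq (Complex.I ^ k) = 1 := by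
  rw [map_pow, Complex.normSq_I, one_pow]

lemma shift_sum_normSq {n : ℕ} (u : (Fin n → ZMod 2) → ℂ) (a : Fin n → ZMod 2) :
    ∑ y : Fin n → ZMod 2, Complex.normSq (u (y + a)) = ∑ x, Complex.normSq (u x) :=
  Fintype.sum_equiv (Equiv.addRight a) _ _ (fun y => rfl)

lemma normSq_trace_le_one {n : ℕ} (a b : Fin n → ZMod 2) (u : (Fin n → ZMod 2) → ℂ)
    (hu : ∑ x, Complex.normSq (u x) = 1) :
    Complex.normSq ((pauli a b * proj u).trace) ≤ 1 := by
  rw [trace_pauli_proj, map_mul, normSq_I_pow, one_mul]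
  set T := ∑ y, (-1 : ℂ) ^ (∑ i, (b i * y i).val) * (u y * conj (u (y + a))) with hT
  have h1 : ‖T‖ ≤ ∑ y, ‖u y‖ * ‖u (y + a)‖ := by
    refine le_trans (norm_sum_le _ _) (le_of_eq ?_)
    apply Finset.sum_congr rfl
    intro y _
    rw [norm_mul, norm_pow, norm_neg, norm_one, one_pow, one_mul, norm_mul, Complex.norm_conj]
  have h2 : (∑ y, ‖u y‖ * ‖u (y + a)‖) ^ 2
      ≤ (∑ y, ‖u y‖ ^ 2) * ∑ y, ‖u (y + a)‖ ^ 2 :=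
    Finset.sum_mul_sq_le_sq_mul_sq _ _ _
  have h3 : ∑ y, ‖u y‖ ^ 2 = 1 := by
    rw [← hu]; exact Finset.sum_congr rfl fun y _ => Complex.sq_norm _
  have h4 : ∑ y, ‖u (y + a)‖ ^ 2 = 1 := by
    rw [← hu, ← shift_sum_normSq u a]
    exact Finset.sum_congr rfl fun y _ => Complex.sq_norm _
  calc Complex.normSq T = ‖T‖ ^ 2 := (Complex.sq_norm T).symm
    _ ≤ (∑ y, ‖u y‖ * ‖u (y + a)‖) ^ 2 := by
        apply pow_le_pow_left₀ (norm_nonneg T) h1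
    _ ≤ 1 := by rw [h3, h4, one_mul] at h2; simpa using h2

lemma sum_normSq_trace {n : ℕ} (u : (Fin n → ZMod 2) → ℂ)
    (hu : ∑ x, Complex.normSq (u x) = 1) :
    ∑ p : (Fin n → ZMod 2) × (Fin n → ZMod 2),
        Complex.normSq ((pauli p.1 p.2 * proj u).trace) = 2 ^ n := by
  rw [Fintype.sum_prod_type]
  have inner : ∀ a : Fin n → ZMod 2, ∑ b : Fin n → ZMod 2,
      Complex.normSq ((pauli a b * proj u).trace)
        = 2 ^ n * ∑ y, Complex.normSq (u y) * Complex.normSq (u (y + a)) := by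
    intro a
    have : ∀ b : Fin n → ZMod 2, Complex.normSq ((pauli a b * proj u).trace)
        = Complex.normSq (∑ y, (-1 : ℂ) ^ (∑ i, (b i * y i).val) * (u y * conj (u (y + a)))) := by
      intro b
      rw [trace_pauli_proj, map_mul, normSq_I_pow, one_mul]
    rw [Finset.sum_congr rfl (fun b _ => this b), sum_b_normSq]
    congr 1
    apply Finset.sum_congr rfl
    intro y _
    rw [map_mul, Complex.normSq_conj]
  rw [Finset.sum_congr rfl (fun a _ => inner a), ← Finset.mul_sum]
  have : ∑ a : Fin n → ZMod 2, ∑ y, Complex.normSq (u y) * Complex.normSq (u (y + a)) = 1 := by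
    rw [Finset.sum_comm]
    have : ∀ y : Fin n → ZMod 2,
        ∑ a : Fin n → ZMod 2, Complex.normSq (u y) * Complex.normSq (u (y + a))
          = Complex.normSq (u y) := by
      intro y
      rw [← Finset.mul_sum]
      have : ∑ a : Fin n → ZMod 2, Complex.normSq (u (y + a)) = 1 := by
        rw [← hu]
        exact Fintype.sum_equiv (Equiv.addLeft y) _ _ (fun a => rfl)
      rw [this, mul_one]
    rw [Finset.sum_congr rfl (fun y _ => this y), hu]
  rw [this, mul_one]

section EntropyHelpers
variable {ι : Type*} [Fintype ι]

lemma shannon_ge (q : ι → ℝ) (D : ℝ) (hD : 0 < D)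
    (hq0 : ∀ i, 0 ≤ q i) (hq1 : ∀ i, q i ≤ 1 / D) (hqs : ∑ i, q i = 1) :
    Real.logb 2 D ≤ -∑ i, q i * Real.logb 2 (q i) := by
  have key : ∀ i, q i * Real.logb 2 (q i) ≤ q i * (-Real.logb 2 D) := by
    intro i
    rcases eq_or_lt_of_le (hq0 i) with h | h
    · simp [← h]
    · apply mul_le_mul_of_nonneg_left _ (hq0 i)
      rw [← Real.logb_inv]
      apply Real.logb_le_logb_of_le one_lt_two h
      rw [one_div] at hq1
      exact hq1 i
  have hsum : ∑ i, q i * Real.logb 2 (q i) ≤ ∑ i, q i * (-Real.logb 2 D) :=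
    Finset.sum_le_sum (fun i _ => key i)
  rw [← Finset.sum_mul, hqs, one_mul] at hsum
  linarith

lemma shannon_le (q : ι → ℝ)
    (hq0 : ∀ i, 0 ≤ q i) (hqs : ∑ i, q i = 1) :
    -∑ i, q i * Real.logb 2 (q i) ≤ Real.logb 2 (Fintype.card ι) := by
  classical
  set N : ℝ := (Fintype.card ι : ℝ) with hN
  have hN0 : 0 < N := by
    have hc : Fintype.card ι ≠ 0 := by
      intro h
      have : IsEmpty ι := Fintype.card_eq_zero_iff.mp h
      rw [Finset.univ_eq_empty, Finset.sum_empty] at hqs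
      norm_num at hqs
    rw [hN]
    exact_mod_cast Nat.pos_of_ne_zero hc
  set S : Finset ι := Finset.univ.filter (fun i => q i ≠ 0) with hS
  have hsum_eq : ∑ i ∈ S, q i * Real.log (q i) = ∑ i, q i * Real.log (q i) := by
    apply Finset.sum_filter_of_ne
    intro i _ h h0
    rw [h0] at h; simp at h
  have hsumS : ∑ i ∈ S, q i = 1 := by
    rw [← hqs]
    apply Finset.sum_filter_of_ne
    intro i _ h
    exact h
  have key : ∀ i ∈ S, -(q i * Real.log (q i)) ≤ 1 / N - q i + q i * Real.log N := by
    intro i hi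
    have hqi : 0 < q i := lt_of_le_of_ne (hq0 i) (Ne.symm (Finset.mem_filter.mp hi).2)
    have h1 : Real.log (1 / (N * q i)) ≤ 1 / (N * q i) - 1 :=
      Real.log_le_sub_one_of_pos (by positivity)
    have h2 : Real.log (1 / (N * q i)) = -Real.log N - Real.log (q i) := by
      rw [one_div, Real.log_inv, Real.log_mul (ne_of_gt hN0) (ne_of_gt hqi)]
      ring
    rw [h2] at h1
    have h3 := mul_le_mul_of_nonneg_left h1 (le_of_lt hqi)
    have h4 : q i * (1 / (N * q i) - 1) = 1 / N - q i := by
      field_simp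
    rw [h4] at h3
    nlinarith
  have hsum := Finset.sum_le_sum key
  have hcard : (S.card : ℝ) ≤ N := by
    rw [hN]
    exact_mod_cast le_trans (Finset.card_filter_le _ _) (le_of_eq Finset.card_univ)
  have hrhs : ∑ i ∈ S, (1 / N - q i + q i * Real.log N) ≤ Real.log N := by
    rw [Finset.sum_add_distrib, Finset.sum_sub_distrib, ← Finset.sum_mul, hsumS,
      Finset.sum_const, one_mul, nsmul_eq_mul]
    have h5 : (S.card : ℝ) * (1 / N) ≤ 1 := by
      rw [mul_one_div]
      exact div_le_one_of_le₀ hcard (le_of_lt hN0)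
    linarith
  have final : -∑ i, q i * Real.log (q i) ≤ Real.log N := by
    rw [← hsum_eq]
    have : -∑ i ∈ S, q i * Real.log (q i) = ∑ i ∈ S, -(q i * Real.log (q i)) := by
      rw [Finset.sum_neg_distrib]
    rw [this]
    exact le_trans hsum hrhs
  simp only [Real.logb]
  have heq : ∑ i, q i * (Real.log (q i) / Real.log 2)
      = (∑ i, q i * Real.log (q i)) / Real.log 2 := by
    rw [Finset.sum_div]
    exact Finset.sum_congr rfl fun i _ => (mul_div_assoc _ _ _).symm
  rw [heq, ← neg_div]
  exact (div_le_div_iff_of_pos_right (Real.log_pos one_lt_two)).mpr final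
end EntropyHelpers

section RpowHelpers
variable {ι : Type*} [Fintype ι]

lemma support_card_ge (q : ι → ℝ) (D : ℝ) (hD : 0 < D)
    (hq1 : ∀ i, q i ≤ 1 / D) (hqs : ∑ i, q i = 1) :
    D ≤ ((Finset.univ.filter (fun i => q i ≠ 0)).card : ℝ) := by
  classical
  set S : Finset ι := Finset.univ.filter (fun i => q i ≠ 0) with hS
  have h1 : ∑ i ∈ S, q i = 1 := by
    rw [← hqs]; exact Finset.sum_filter_of_ne (fun i _ h => h)
  have h2 : ∑ i ∈ S, q i ≤ (S.card : ℝ) * (1 / D) := by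
    have := Finset.sum_le_card_nsmul S q (1 / D) (fun i _ => hq1 i)
    simpa [nsmul_eq_mul] using this
  rw [h1] at h2
  have h3 := mul_le_mul_of_nonneg_right h2 (le_of_lt hD)
  have h4 : (S.card : ℝ) * (1 / D) * D = (S.card : ℝ) := by field_simp
  rw [one_mul, h4] at h3
  exact h3

lemma sum_rpow_ge_rpow (q : ι → ℝ) (D α : ℝ) (hD : 0 < D) (hα : 0 < α) (hα1 : α < 1)
    (hq0 : ∀ i, 0 ≤ q i) (hq1 : ∀ i, q i ≤ 1 / D) (hqs : ∑ i, q i = 1) :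
    D ^ (1 - α) ≤ ∑ i, q i ^ α := by
  have key : ∀ i, q i * D ^ (1 - α) ≤ q i ^ α := by
    intro i
    rcases eq_or_lt_of_le (hq0 i) with h | h
    · rw [← h, zero_mul, Real.zero_rpow (ne_of_gt hα)]
    · have hqD : q i * D ≤ 1 := by
        rw [← le_div_iff₀ hD]; exact hq1 i
      have h1 : 1 ≤ (q i * D) ^ (α - 1) :=
        Real.one_le_rpow_of_pos_of_le_one_of_nonpos (by positivity) hqD (by linarith)
      rw [Real.mul_rpow (le_of_lt h) (le_of_lt hD)] at h1
      have h2 : D ^ (α - 1) * D ^ (1 - α) = 1 := by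
        rw [← Real.rpow_add hD]; norm_num
      have h3 : q i ^ α = q i * q i ^ (α - 1) := by
        nth_rewrite 2 [← Real.rpow_one (q i)]
        rw [← Real.rpow_add h]; ring_nf
      rw [h3]
      have hD1 : 0 < D ^ (1 - α) := Real.rpow_pos_of_pos hD _
      have h5 : D ^ (1 - α) ≤ q i ^ (α - 1) := by
        have h6 := mul_le_mul_of_nonneg_right h1 (le_of_lt hD1)
        rw [one_mul, mul_assoc, h2, mul_one] at h6
        exact h6
      exact mul_le_mul_of_nonneg_left h5 (le_of_lt h)
  calc D ^ (1 - α) = (∑ i, q i) * D ^ (1 - α) := by rw [hqs, one_mul]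
    _ = ∑ i, q i * D ^ (1 - α) := Finset.sum_mul _ _ _
    _ ≤ ∑ i, q i ^ α := Finset.sum_le_sum fun i _ => key i

lemma sum_rpow_le_rpow (q : ι → ℝ) (D α : ℝ) (hD : 0 < D) (hα : 1 < α)
    (hq0 : ∀ i, 0 ≤ q i) (hq1 : ∀ i, q i ≤ 1 / D) (hqs : ∑ i, q i = 1) :
    ∑ i, q i ^ α ≤ D ^ (1 - α) := by
  have key : ∀ i, q i ^ α ≤ q i * D ^ (1 - α) := by
    intro i
    rcases eq_or_lt_of_le (hq0 i) with h | h
    · rw [← h, zero_mul, Real.zero_rpow (ne_of_gt (by linarith : (0:ℝ) < α))]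
    · have hqD : q i * D ≤ 1 := by
        rw [← le_div_iff₀ hD]; exact hq1 i
      have h1 : (q i * D) ^ (α - 1) ≤ 1 :=
        Real.rpow_le_one (by positivity) hqD (by linarith)
      rw [Real.mul_rpow (le_of_lt h) (le_of_lt hD)] at h1
      have h2 : D ^ (α - 1) * D ^ (1 - α) = 1 := by
        rw [← Real.rpow_add hD]; norm_num
      have h3 : q i ^ α = q i * q i ^ (α - 1) := by
        nth_rewrite 2 [← Real.rpow_one (q i)]
        rw [← Real.rpow_add h]; ring_nf
      rw [h3]
      have hD1 : 0 < D ^ (1 - α) := Real.rpow_pos_of_pos hD _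
      have h5 : q i ^ (α - 1) ≤ D ^ (1 - α) := by
        have h6 := mul_le_mul_of_nonneg_right h1 (le_of_lt hD1)
        rw [one_mul, mul_assoc, h2, mul_one] at h6
        exact h6
      exact mul_le_mul_of_nonneg_left h5 (le_of_lt h)
  calc ∑ i, q i ^ α ≤ ∑ i, q i * D ^ (1 - α) := Finset.sum_le_sum fun i _ => key i
    _ = (∑ i, q i) * D ^ (1 - α) := (Finset.sum_mul _ _ _).symm
    _ = D ^ (1 - α) := by rw [hqs, one_mul]

lemma sum_rpow_le_card (q : ι → ℝ) (α : ℝ) (hα : 0 < α) (hα1 : α < 1)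
    (hq0 : ∀ i, 0 ≤ q i) (hqs : ∑ i, q i = 1)
    (hN : 0 < (Fintype.card ι : ℝ)) :
    ∑ i, q i ^ α ≤ (Fintype.card ι : ℝ) ^ (1 - α) := by
  set N : ℝ := (Fintype.card ι : ℝ) with hNd
  have key : ∀ i, N ^ α * q i ^ α ≤ α * (N * q i) + (1 - α) := by
    intro i
    have h1 : (N * q i) ^ α * 1 ^ (1 - α) ≤ α * (N * q i) + (1 - α) * 1 :=
      Real.geom_mean_le_arith_mean2_weighted (le_of_lt hα) (by linarith)
        (mul_nonneg (le_of_lt hN) (hq0 i)) zero_le_one (by ring)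
    rw [Real.one_rpow, mul_one, mul_one] at h1
    rw [← Real.mul_rpow (le_of_lt hN) (hq0 i)]
    exact h1
  have hsum : ∑ i, N ^ α * q i ^ α ≤ ∑ i, (α * (N * q i) + (1 - α)) :=
    Finset.sum_le_sum (fun i _ => key i)
  rw [← Finset.mul_sum] at hsum
  have hrhs : ∑ i, (α * (N * q i) + (1 - α)) = N := by
    rw [Finset.sum_add_distrib, Finset.sum_const, nsmul_eq_mul]
    have : ∑ i, α * (N * q i) = α * N := by
      rw [← Finset.mul_sum, ← Finset.mul_sum, hqs, mul_one]
    rw [this, Finset.card_univ, ← hNd]; ring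
  rw [hrhs] at hsum
  have hNα : 0 < N ^ α := Real.rpow_pos_of_pos hN _
  rw [show (1 - α) = 1 - α from rfl, Real.rpow_sub hN, Real.rpow_one]
  rw [le_div_iff₀ hNα, mul_comm]
  exact hsum

lemma sum_rpow_ge_card (q : ι → ℝ) (α : ℝ) (hα : 1 < α)
    (hq0 : ∀ i, 0 ≤ q i) (hqs : ∑ i, q i = 1)
    (hN : 0 < (Fintype.card ι : ℝ)) :
    (Fintype.card ι : ℝ) ^ (1 - α) ≤ ∑ i, q i ^ α := by
  set N : ℝ := (Fintype.card ι : ℝ) with hNd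
  have key : ∀ i, 1 + α * (N * q i - 1) ≤ N ^ α * q i ^ α := by
    intro i
    have h1 : 1 + α * (N * q i - 1) ≤ (1 + (N * q i - 1)) ^ α :=
      one_add_mul_self_le_rpow_one_add (by nlinarith [hq0 i, mul_nonneg (le_of_lt hN) (hq0 i)]) (le_of_lt hα)
    have h2 : (1 + (N * q i - 1)) = N * q i := by ring
    rw [h2, Real.mul_rpow (le_of_lt hN) (hq0 i)] at h1
    exact h1
  have hsum : ∑ i, (1 + α * (N * q i - 1)) ≤ ∑ i, N ^ α * q i ^ α :=
    Finset.sum_le_sum (fun i _ => key i)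
  rw [← Finset.mul_sum] at hsum
  have hlhs : ∑ i, (1 + α * (N * q i - 1)) = N := by
    rw [Finset.sum_add_distrib, Finset.sum_const, nsmul_eq_mul, mul_one, Finset.card_univ]
    have : ∑ i, α * (N * q i - 1) = 0 := by
      rw [← Finset.mul_sum, Finset.sum_sub_distrib, ← Finset.mul_sum, hqs, mul_one,
        Finset.sum_const, nsmul_eq_mul, mul_one, Finset.card_univ, ← hNd, sub_self, mul_zero]
    rw [this, ← hNd, add_zero]
  rw [hlhs] at hsum
  have hNα : 0 < N ^ α := Real.rpow_pos_of_pos hN _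
  rw [Real.rpow_sub hN, Real.rpow_one, div_le_iff₀ hNα, mul_comm]
  exact hsum
end RpowHelpers

/-- 0 ≤ M_α(ψ) ≤ n for any pure state and α ≥ 0, with M_α(ψ) = 0
whenever ψ is a pure stabilizer state. -/
theorem MStab_nonneg_le {n : ℕ} (α : ℝ) (hα : 0 ≤ α)
    (u : (Fin n → ZMod 2) → ℂ) (hu : ∑ x, Complex.normSq (u x) = 1) :
    0 ≤ MStab α (proj u) ∧ MStab α (proj u) ≤ n ∧
    (IsStabVec u → MStab α (proj u) = 0) := by
  classical
  have hD : (0:ℝ) < 2 ^ n := by positivity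
  have hq0 : ∀ p : (Fin n → ZMod 2) × (Fin n → ZMod 2), 0 ≤ xi (proj u) p :=
    fun p => div_nonneg (Complex.normSq_nonneg _) (le_of_lt hD)
  have hq1 : ∀ p : (Fin n → ZMod 2) × (Fin n → ZMod 2), xi (proj u) p ≤ 1 / 2 ^ n := by
    intro p
    unfold xi
    exact (div_le_div_iff_of_pos_right hD).mpr (normSq_trace_le_one _ _ u hu)
  have hqs : ∑ p : (Fin n → ZMod 2) × (Fin n → ZMod 2), xi (proj u) p = 1 := by
    unfold xi
    rw [← Finset.sum_div, sum_normSq_trace u hu, div_self (ne_of_gt hD)]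
  have hcard : (Fintype.card ((Fin n → ZMod 2) × (Fin n → ZMod 2)) : ℝ)
      = (2:ℝ) ^ n * 2 ^ n := by
    rw [Fintype.card_prod]
    have : Fintype.card (Fin n → ZMod 2) = 2 ^ n := by
      rw [Fintype.card_fun, ZMod.card, Fintype.card_fin]
    rw [this]
    push_cast
    ring
  have hlog2 : Real.logb 2 2 = 1 := by
    rw [Real.logb, div_self (ne_of_gt (Real.log_pos one_lt_two))]
  have hlogD : Real.logb 2 ((2:ℝ) ^ n) = n := by
    rw [Real.logb_pow, hlog2, mul_one]
  have hlogN : Real.logb 2 ((2:ℝ) ^ n * 2 ^ n) = (n:ℝ) + n := by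
    rw [Real.logb_mul (ne_of_gt hD) (ne_of_gt hD), hlogD]
  set B : ℝ := (if α = 1 then
      - ∑ p : (Fin n → ZMod 2) × (Fin n → ZMod 2),
          xi (proj u) p * Real.logb 2 (xi (proj u) p)
    else if α = 0 then
      Real.logb 2 (({p : (Fin n → ZMod 2) × (Fin n → ZMod 2) | xi (proj u) p ≠ 0}.ncard : ℝ))
    else
      (1 / (1 - α)) * Real.logb 2
        (∑ p : (Fin n → ZMod 2) × (Fin n → ZMod 2), (xi (proj u) p) ^ α)) with hB
  have hMS : MStab α (proj u) = B - n := rfl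
  -- stabilizer data
  have hstab : IsStabVec u → ∃ S : Finset ((Fin n → ZMod 2) × (Fin n → ZMod 2)),
      S.card = 2 ^ n ∧ (∀ p ∈ S, xi (proj u) p = 1 / 2 ^ n) ∧
      (∀ p ∉ S, xi (proj u) p = 0) := by
    intro hst
    have hfin : ({p : (Fin n → ZMod 2) × (Fin n → ZMod 2) |
        Complex.normSq ((pauli p.1 p.2 * proj u).trace) = 1}).Finite := Set.toFinite _
    refine ⟨hfin.toFinset, ?_, ?_, ?_⟩
    · rw [← Set.ncard_eq_toFinset_card _ hfin]
      exact hst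
    · intro p hp
      unfold xi
      rw [(Set.Finite.mem_toFinset hfin).mp hp]
    · have hScard : hfin.toFinset.card = 2 ^ n := by
        rw [← Set.ncard_eq_toFinset_card _ hfin]; exact hst
      have hin : ∀ p ∈ hfin.toFinset, xi (proj u) p = 1 / 2 ^ n := by
        intro p hp
        unfold xi
        rw [(Set.Finite.mem_toFinset hfin).mp hp]
      have hsumS : ∑ p ∈ hfin.toFinset, xi (proj u) p = 1 := by
        rw [Finset.sum_congr rfl hin, Finset.sum_const, hScard, nsmul_eq_mul]
        push_cast
        field_simp
      have hsplit := Finset.sum_sdiff (Finset.subset_univ hfin.toFinset)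
        (f := xi (proj u))
      rw [hsumS, hqs] at hsplit
      have hzero : ∑ p ∈ Finset.univ \ hfin.toFinset, xi (proj u) p = 0 := by linarith
      intro p hp
      exact (Finset.sum_eq_zero_iff_of_nonneg (fun i _ => hq0 i)).mp hzero p
        (Finset.mem_sdiff.mpr ⟨Finset.mem_univ _, hp⟩)
  suffices h : (n:ℝ) ≤ B ∧ B ≤ (n:ℝ) + n ∧ (IsStabVec u → B = n) by
    obtain ⟨h1, h2, h3⟩ := h
    rw [hMS]
    exact ⟨by linarith, by linarith, fun hs => by rw [h3 hs]; ring⟩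
  by_cases hα1 : α = 1
  · rw [hB, if_pos hα1]
    refine ⟨?_, ?_, ?_⟩
    · rw [← hlogD]
      exact shannon_ge (xi (proj u)) ((2:ℝ) ^ n) hD hq0 hq1 hqs
    · rw [← hlogN, ← hcard]
      exact shannon_le (xi (proj u)) hq0 hqs
    · intro hst
      obtain ⟨S, hScard, hin, hout⟩ := hstab hst
      have hsum : ∑ p : (Fin n → ZMod 2) × (Fin n → ZMod 2),
          xi (proj u) p * Real.logb 2 (xi (proj u) p)
          = ∑ p ∈ S, xi (proj u) p * Real.logb 2 (xi (proj u) p) := by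
        symm
        apply Finset.sum_subset (Finset.subset_univ S)
        intro p _ hp
        rw [hout p hp, zero_mul]
      rw [hsum, Finset.sum_congr rfl (fun p hp => by rw [hin p hp]), Finset.sum_const,
        hScard, nsmul_eq_mul]
      rw [one_div, Real.logb_inv, hlogD]
      push_cast
      field_simp
  · by_cases hα0 : α = 0
    · rw [hB, if_neg hα1, if_pos hα0]
      have hsupp : ({p : (Fin n → ZMod 2) × (Fin n → ZMod 2) | xi (proj u) p ≠ 0}.ncard : ℝ)
          = ((Finset.univ.filter (fun p => xi (proj u) p ≠ 0)).card : ℝ) := by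
        congr 1
        rw [← Set.ncard_coe_finset]
        congr 1
        ext p
        simp
      have hge := support_card_ge (xi (proj u)) ((2:ℝ) ^ n) hD hq1 hqs
      have hle : ((Finset.univ.filter (fun p => xi (proj u) p ≠ 0)).card : ℝ)
          ≤ (2:ℝ) ^ n * 2 ^ n := by
        rw [← hcard]
        exact_mod_cast Nat.cast_le.mpr
          (le_trans (Finset.card_filter_le _ _) (le_of_eq Finset.card_univ))
      refine ⟨?_, ?_, ?_⟩
      · rw [hsupp, ← hlogD]
        exact Real.logb_le_logb_of_le one_lt_two hD hge
      · rw [hsupp, ← hlogN]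
        exact Real.logb_le_logb_of_le one_lt_two (lt_of_lt_of_le hD hge) hle
      · intro hst
        obtain ⟨S, hScard, hin, hout⟩ := hstab hst
        have hset : {p : (Fin n → ZMod 2) × (Fin n → ZMod 2) | xi (proj u) p ≠ 0}
            = (↑S : Set ((Fin n → ZMod 2) × (Fin n → ZMod 2))) := by
          ext p
          simp only [Set.mem_setOf_eq, Finset.coe_sort_coe, Finset.mem_coe]
          constructor
          · intro hne
            by_contra hp
            exact hne (hout p hp)
          · intro hp
            rw [hin p hp]
            positivity
        rw [hset, Set.ncard_coe_finset, hScard]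
        push_cast
        rw [hlogD]
    · -- generic α
      rw [hB, if_neg hα1, if_neg hα0]
      have hαpos : 0 < α := lt_of_le_of_ne hα (Ne.symm hα0)
      have hNpos : 0 < (Fintype.card ((Fin n → ZMod 2) × (Fin n → ZMod 2)) : ℝ) := by
        rw [hcard]; positivity
      have hstabval : IsStabVec u → (1 / (1 - α)) * Real.logb 2
          (∑ p : (Fin n → ZMod 2) × (Fin n → ZMod 2), (xi (proj u) p) ^ α) = n := by
        intro hst
        obtain ⟨S, hScard, hin, hout⟩ := hstab hst
        have hsum : ∑ p : (Fin n → ZMod 2) × (Fin n → ZMod 2), (xi (proj u) p) ^ α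
            = ((2:ℝ) ^ n) * ((1 / 2 ^ n : ℝ)) ^ α := by
          rw [← Finset.sum_subset (Finset.subset_univ S)
            (fun p _ hp => by rw [hout p hp, Real.zero_rpow hα0])]
          rw [Finset.sum_congr rfl (fun p hp => by rw [hin p hp]), Finset.sum_const,
            hScard, nsmul_eq_mul]
          push_cast
          ring
        rw [hsum]
        have hpos : (0:ℝ) < (1 / 2 ^ n : ℝ) ^ α := Real.rpow_pos_of_pos (by positivity) _
        have hloginv : Real.logb 2 ((1:ℝ) / 2 ^ n) = -(n:ℝ) := by
          rw [one_div, Real.logb_inv, hlogD]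
        rw [Real.logb_mul (ne_of_gt hD) (ne_of_gt hpos), hlogD,
          Real.logb_rpow_eq_mul_logb_of_pos (by positivity), hloginv]
        have h1α : (1:ℝ) - α ≠ 0 := fun h => hα1 (by linarith)
        field_simp
        ring
      have h1α : (1:ℝ) - α ≠ 0 := fun h => hα1 (by linarith)
      rcases lt_or_gt_of_ne (fun h => hα1 h) with hlt | hgt
      · -- α < 1
        have hlow := sum_rpow_ge_rpow (xi (proj u)) ((2:ℝ) ^ n) α hD hαpos hlt hq0 hq1 hqs
        have hhigh := sum_rpow_le_card (xi (proj u)) α hαpos hlt hq0 hqs hNpos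
        have hA0 : (0:ℝ) < ∑ p : (Fin n → ZMod 2) × (Fin n → ZMod 2), (xi (proj u) p) ^ α :=
          lt_of_lt_of_le (Real.rpow_pos_of_pos hD _) hlow
        have hlogA1 : (1 - α) * (n:ℝ) ≤ Real.logb 2
            (∑ p : (Fin n → ZMod 2) × (Fin n → ZMod 2), (xi (proj u) p) ^ α) := by
          have := Real.logb_le_logb_of_le one_lt_two (Real.rpow_pos_of_pos hD _) hlow
          rwa [Real.logb_rpow_eq_mul_logb_of_pos hD, hlogD] at this
        have hlogA2 : Real.logb 2
            (∑ p : (Fin n → ZMod 2) × (Fin n → ZMod 2), (xi (proj u) p) ^ α)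
            ≤ (1 - α) * ((n:ℝ) + n) := by
          have := Real.logb_le_logb_of_le one_lt_two hA0 hhigh
          rwa [Real.logb_rpow_eq_mul_logb_of_pos hNpos, hcard, hlogN] at this
        have hc : (0:ℝ) < 1 / (1 - α) := by
          apply div_pos one_pos; linarith
        have heq1 : (1 / (1 - α)) * ((1 - α) * (n:ℝ)) = n := by field_simp
        have heq2 : (1 / (1 - α)) * ((1 - α) * ((n:ℝ) + n)) = (n:ℝ) + n := by field_simp
        refine ⟨?_, ?_, hstabval⟩
        · have := mul_le_mul_of_nonneg_left hlogA1 (le_of_lt hc)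
          linarith
        · have := mul_le_mul_of_nonneg_left hlogA2 (le_of_lt hc)
          linarith
      · -- α > 1
        have hhigh := sum_rpow_le_rpow (xi (proj u)) ((2:ℝ) ^ n) α hD hgt hq0 hq1 hqs
        have hlow := sum_rpow_ge_card (xi (proj u)) α hgt hq0 hqs hNpos
        have hA0 : (0:ℝ) < ∑ p : (Fin n → ZMod 2) × (Fin n → ZMod 2), (xi (proj u) p) ^ α :=
          lt_of_lt_of_le (Real.rpow_pos_of_pos hNpos _) hlow
        have hlogA1 : Real.logb 2
            (∑ p : (Fin n → ZMod 2) × (Fin n → ZMod 2), (xi (proj u) p) ^ α)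
            ≤ (1 - α) * (n:ℝ) := by
          have := Real.logb_le_logb_of_le one_lt_two hA0 hhigh
          rwa [Real.logb_rpow_eq_mul_logb_of_pos hD, hlogD] at this
        have hlogA2 : (1 - α) * ((n:ℝ) + n) ≤ Real.logb 2
            (∑ p : (Fin n → ZMod 2) × (Fin n → ZMod 2), (xi (proj u) p) ^ α) := by
          have := Real.logb_le_logb_of_le one_lt_two (Real.rpow_pos_of_pos hNpos _) hlow
          rwa [Real.logb_rpow_eq_mul_logb_of_pos hNpos, hcard, hlogN] at this
        have hc : 1 / (1 - α) < 0 := by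
          apply div_neg_of_pos_of_neg one_pos; linarith
        have heq1 : (1 / (1 - α)) * ((1 - α) * (n:ℝ)) = n := by field_simp
        have heq2 : (1 / (1 - α)) * ((1 - α) * ((n:ℝ) + n)) = (n:ℝ) + n := by field_simp
        refine ⟨?_, ?_, hstabval⟩
        · have := mul_le_mul_of_nonpos_left hlogA1 (le_of_lt hc)
          linarith
        · have := mul_le_mul_of_nonpos_left hlogA2 (le_of_lt hc)
          linarith
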